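/- S(1) = (ln(2π) - γ - 1)/2, where S(a) = Σ_{n=1}^∞ [ln(n/a) - a/(2n) - ψ(n/a)], ψ is the digamma function, and γ is the Euler–Mascheroni constant. -/

import Mathlib

open Real

/-- The digamma function `ψ(x) = Γ'(x)/Γ(x) = d(log Γ)/dx`. -/
noncomputable def digamma (x : ℝ) : ℝ := deriv (fun y : ℝ => Real.log (Real.Gamma y)) x

/-- `S(a) = Σ_{n=1}^∞ [ln(n/a) - a/(2n) - ψ(n/a)]`. -/
noncomputable def S (a : ℝ) : ℝ :=
  ∑' n : ℕ+, (Real.log ((n : ℝ) / a) - a / (2 * (n : ℝ)) - digamma ((n : ℝ) / a))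

open Filter Topology Finset

local notation "γ" => Real.eulerMascheroniConstant


lemma digamma_nat_succ (m : ℕ) :
    digamma ((m : ℝ) + 1) = (harmonic m : ℝ) - γ := by
  have hd : DifferentiableAt ℝ Real.Gamma ((m : ℝ) + 1) :=
    Real.differentiableAt_Gamma (fun k => by
      have h1 : (0:ℝ) ≤ (k:ℝ) := Nat.cast_nonneg k
      have h2 : (0:ℝ) ≤ (m:ℝ) := Nat.cast_nonneg m
      intro h
      linarith)
  have hne : Real.Gamma ((m : ℝ) + 1) ≠ 0 := by
    rw [Real.Gamma_nat_eq_factorial]; positivity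
  rw [digamma, deriv.log hd hne, Real.deriv_Gamma_nat, Real.Gamma_nat_eq_factorial]
  have hf : (m.factorial : ℝ) ≠ 0 := by positivity
  field_simp
  ring

/-- telescoping sum of an antitone convergent sequence -/
lemma hasSum_telescope {g : ℕ → ℝ} {l : ℝ} (hmono : ∀ j, g (j + 1) ≤ g j)
    (hlim : Tendsto g atTop (𝓝 l)) :
    HasSum (fun j => g j - g (j + 1)) (g 0 - l) := by
  rw [hasSum_iff_tendsto_nat_of_nonneg (fun j => sub_nonneg.2 (hmono j))]
  have : (fun n => ∑ i ∈ Finset.range n, (g i - g (i + 1))) = fun n => g 0 - g n :=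
    funext fun n => Finset.sum_range_sub' g n
  rw [this]
  exact tendsto_const_nhds.sub hlim


/-- `G n = harmonic n - log n`, tending to `γ`. -/
noncomputable def Gaux (n : ℕ) : ℝ := (harmonic n : ℝ) - Real.log n

lemma tendsto_Gaux : Tendsto Gaux atTop (𝓝 γ) := Real.tendsto_harmonic_sub_log

/-- lower bound for log increments -/
lemma one_div_le_log_succ {k : ℕ} (hk : 1 ≤ k) :
    1 / ((k : ℝ) + 1) ≤ Real.log ((k : ℝ) + 1) - Real.log k := by
  have hk0 : (0:ℝ) < k := by exact_mod_cast hk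
  have h1 : Real.log ((k:ℝ) / (k + 1)) ≤ (k:ℝ) / (k + 1) - 1 :=
    Real.log_le_sub_one_of_pos (by positivity)
  rw [Real.log_div (by positivity) (by positivity)] at h1
  have : (k:ℝ) / (k + 1) - 1 = -(1 / ((k:ℝ) + 1)) := by field_simp; ring
  linarith [this ▸ h1]

/-- `t` series: `∑_{k≥n} (log(k+1) - log k - 1/(k+1)) = G n - γ` for `n ≥ 1`. -/
lemma hasSum_t (n : ℕ) (hn : 1 ≤ n) :
    HasSum (fun j => Real.log ((j + n : ℕ) + 1 : ℝ) - Real.log (j + n : ℕ)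
      - 1 / ((j + n : ℕ) + 1 : ℝ)) (Gaux n - γ) := by
  have key := hasSum_telescope (g := fun j => Gaux (j + n)) (l := γ)
    (fun j => by
      have e : j + 1 + n = (j + n) + 1 := by omega
      have h := one_div_le_log_succ (k := j + n) (by omega)
      simp only [Gaux, e, harmonic_succ]
      push_cast at h ⊢
      simp only [one_div] at h
      linarith)
    (tendsto_Gaux.comp (tendsto_add_atTop_nat n))
  simp only [zero_add] at key
  have : (fun j => Real.log ((j + n : ℕ) + 1 : ℝ) - Real.log (j + n : ℕ)
      - 1 / ((j + n : ℕ) + 1 : ℝ)) = fun j => Gaux (j + n) - Gaux (j + 1 + n) := by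
    funext j
    have e : j + 1 + n = (j + n) + 1 := by omega
    simp only [Gaux, e, harmonic_succ]
    push_cast
    ring
  rw [this]
  exact key

/-- `b` series: `∑_{k≥n} (1/(2k) - 1/(2(k+1))) = 1/(2n)` for `n ≥ 1`. -/
lemma hasSum_b (n : ℕ) (hn : 1 ≤ n) :
    HasSum (fun j => 1 / (2 * ((j + n : ℕ) : ℝ)) - 1 / (2 * ((j + n : ℕ) + 1 : ℝ)))
      (1 / (2 * (n : ℝ))) := by
  have hX : Tendsto (fun j : ℕ => ((j + n : ℕ) : ℝ)) atTop atTop :=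
    tendsto_natCast_atTop_atTop.comp (tendsto_add_atTop_nat n)
  have key := hasSum_telescope (g := fun j => 1 / (2 * ((j + n : ℕ) : ℝ))) (l := 0)
    (fun j => by
      have e : j + 1 + n = (j + n) + 1 := by omega
      rw [e]
      push_cast
      have h1 : (1:ℝ) ≤ (j:ℝ) + (n:ℝ) := by exact_mod_cast (by omega : 1 ≤ j + n)
      apply one_div_le_one_div_of_le (by linarith) (by linarith))
    (tendsto_const_nhds.div_atTop (hX.const_mul_atTop two_pos))
  simp only [zero_add, sub_zero] at key
  have : (fun j => 1 / (2 * ((j + n : ℕ) : ℝ)) - 1 / (2 * ((j + n : ℕ) + 1 : ℝ)))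
      = fun j => 1 / (2 * ((j + n : ℕ) : ℝ)) - 1 / (2 * ((j + 1 + n : ℕ) : ℝ)) := by
    funext j
    have e : j + 1 + n = (j + n) + 1 := by omega
    rw [e]
    push_cast
    ring_nf
  rw [this]
  exact key


lemma key_est {k : ℝ} (hk : 2 ≤ k) :
    |(Real.log (k + 1) - Real.log k - 1 / (k + 1)) - (1 / (2 * k) - 1 / (2 * (k + 1)))|
      ≤ 2 * (1 / ((k - 1) * k) - 1 / (k * (k + 1))) := by
  have hk0 : (0:ℝ) < k := by linarith
  have hk1 : (0:ℝ) < k - 1 := by linarith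
  have hk2 : (0:ℝ) < k + 1 := by linarith
  set D : ℝ := 2 * k ^ 2 * (k - 1) * (k + 1) with hDdef
  have hD : (0:ℝ) < D := by positivity
  have habs : |(-(1/k))| = 1/k := by rw [abs_neg, abs_of_pos (by positivity)]
  have hx : |(-(1/k))| < 1 := by rw [habs, div_lt_one hk0]; linarith
  have h := Real.abs_log_sub_add_sum_range_le hx 2
  rw [habs] at h
  simp only [Finset.sum_range_succ, Finset.sum_range_zero] at h
  norm_num at h
  have hlog : Real.log (1 + k⁻¹) = Real.log (k + 1) - Real.log k := by
    rw [show (1:ℝ) + k⁻¹ = (k+1)/k by field_simp, Real.log_div (by positivity) hk0.ne']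
  rw [hlog] at h
  set A : ℝ := -k⁻¹ + (k ^ 2)⁻¹ / 2 + (Real.log (k + 1) - Real.log k) with hA
  have hB : (k ^ 3)⁻¹ / (1 - k⁻¹) = 2 * (k + 1) / D := by
    rw [hDdef]; field_simp
  rw [hB] at h
  have hT : (Real.log (k + 1) - Real.log k - 1 / (k + 1)) - (1 / (2 * k) - 1 / (2 * (k + 1)))
      = A + (-(k - 1)) / D := by
    rw [hA, hDdef]; field_simp; ring
  have hC : 2 * (1 / ((k - 1) * k) - 1 / (k * (k + 1))) = 8 * k / D := by
    rw [hDdef]; field_simp; ring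
  rw [hT, hC, abs_le] at *
  obtain ⟨h1, h2⟩ := h
  have m1 : 2 * (k + 1) / D + (-(k-1)) / D ≤ 8 * k / D := by
    rw [← add_div, div_le_div_iff₀ hD hD]
    nlinarith
  have m2 : -(8 * k / D) ≤ -(2 * (k + 1) / D) + (-(k-1)) / D := by
    rw [show -(2 * (k + 1) / D) + (-(k-1)) / D = (-(2*(k+1)) + -(k-1)) / D by ring,
      show -(8 * k / D) = (-(8*k))/D by ring, div_le_div_iff₀ hD hD]
    nlinarith
  constructor <;> linarith

/-- `d` telescoping series. -/
lemma hasSum_d (n : ℕ) (hn : 1 ≤ n) :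
    HasSum (fun j => 1 / (((j + n : ℕ) : ℝ) * ((j + n : ℕ) + 1 : ℝ))
      - 1 / ((((j + n : ℕ) : ℝ) + 1) * ((j + n : ℕ) + 2 : ℝ)))
      (1 / ((n : ℝ) * ((n : ℝ) + 1))) := by
  have hX : Tendsto (fun j : ℕ => ((j + n : ℕ) : ℝ)) atTop atTop :=
    tendsto_natCast_atTop_atTop.comp (tendsto_add_atTop_nat n)
  have key := hasSum_telescope
      (g := fun j => 1 / (((j + n : ℕ) : ℝ) * ((j + n : ℕ) + 1 : ℝ))) (l := 0)
    (fun j => by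
      have e : j + 1 + n = (j + n) + 1 := by omega
      rw [e]
      push_cast
      have h1 : (1:ℝ) ≤ (j:ℝ) + (n:ℝ) := by exact_mod_cast (by omega : 1 ≤ j + n)
      apply one_div_le_one_div_of_le (by nlinarith) (by nlinarith))
    (tendsto_const_nhds.div_atTop
      (Tendsto.atTop_mul_atTop₀ hX (tendsto_atTop_add_const_right _ 1 hX)))
  simp only [zero_add, sub_zero] at key
  have : (fun j => 1 / (((j + n : ℕ) : ℝ) * ((j + n : ℕ) + 1 : ℝ))
      - 1 / ((((j + n : ℕ) : ℝ) + 1) * ((j + n : ℕ) + 2 : ℝ)))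
      = fun j => 1 / (((j + n : ℕ) : ℝ) * ((j + n : ℕ) + 1 : ℝ))
      - 1 / (((j + 1 + n : ℕ) : ℝ) * ((j + 1 + n : ℕ) + 1 : ℝ)) := by
    funext j
    have e : j + 1 + n = (j + n) + 1 := by omega
    rw [e]
    push_cast
    ring_nf
  rw [this]
  exact key

/-- Master second-order estimate for harmonic numbers. -/
lemma master_est (p : ℕ) :
    |Gaux (p + 2) - Real.eulerMascheroniConstant - 1 / (2 * ((p : ℝ) + 2))|
      ≤ 2 * (1 / (((p : ℝ) + 1) * ((p : ℝ) + 2))) := by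
  have hA := (hasSum_t (p + 2) (by omega)).sub (hasSum_b (p + 2) (by omega))
  have hB := (hasSum_d (p + 1) (by omega)).mul_left 2
  have hterm : ∀ j : ℕ,
      |((Real.log ((j + (p + 2) : ℕ) + 1 : ℝ) - Real.log (j + (p + 2) : ℕ)
          - 1 / ((j + (p + 2) : ℕ) + 1 : ℝ))
        - (1 / (2 * ((j + (p + 2) : ℕ) : ℝ)) - 1 / (2 * ((j + (p + 2) : ℕ) + 1 : ℝ))))|
      ≤ 2 * (1 / (((j + (p + 1) : ℕ) : ℝ) * ((j + (p + 1) : ℕ) + 1 : ℝ))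
          - 1 / ((((j + (p + 1) : ℕ) : ℝ) + 1) * ((j + (p + 1) : ℕ) + 2 : ℝ))) := by
    intro j
    have hk : (2:ℝ) ≤ (j:ℝ) + (p:ℝ) + 2 := by
      have := Nat.cast_nonneg (α := ℝ) j; have := Nat.cast_nonneg (α := ℝ) p; linarith
    have := key_est hk
    push_cast
    ring_nf
    ring_nf at this
    exact this
  have upper := hasSum_le (fun j => (abs_le.1 (hterm j)).2) hA hB
  have lower := hasSum_le (fun j => (abs_le.1 (hterm j)).1) hB.neg hA
  rw [abs_le]
  push_cast at upper lower ⊢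
  ring_nf at upper lower ⊢
  constructor <;> linarith

lemma tendsto_mul_Gaux :
    Tendsto (fun n : ℕ => (n : ℝ) * (Gaux n - γ)) atTop (𝓝 (1 / 2)) := by
  rw [← tendsto_add_atTop_iff_nat 2]
  have hb : ∀ p : ℕ, ‖((p : ℝ) + 2) * (Gaux (p + 2) - γ) - 1 / 2‖ ≤ 2 / ((p : ℝ) + 1) := by
    intro p
    have h := master_est p
    have hp2 : ((p:ℝ) + 2) ≠ 0 := by positivity
    have e1 : ((p : ℝ) + 2) * (Gaux (p + 2) - γ) - 1 / 2
        = ((p:ℝ) + 2) * (Gaux (p + 2) - γ - 1 / (2 * ((p : ℝ) + 2))) := by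
      field_simp
    rw [Real.norm_eq_abs, e1, abs_mul, abs_of_pos (by positivity)]
    calc ((p:ℝ) + 2) * |Gaux (p + 2) - γ - 1 / (2 * ((p : ℝ) + 2))|
        ≤ ((p:ℝ) + 2) * (2 * (1 / (((p : ℝ) + 1) * ((p : ℝ) + 2)))) := by
          apply mul_le_mul_of_nonneg_left h (by positivity)
      _ = 2 / ((p : ℝ) + 1) := by field_simp
  have hz : Tendsto (fun p : ℕ => ((p : ℝ) + 2) * (Gaux (p + 2) - γ) - 1 / 2) atTop (𝓝 0) := by
    apply squeeze_zero_norm hb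
    exact tendsto_const_nhds.div_atTop (tendsto_atTop_add_const_right _ 1 tendsto_natCast_atTop_atTop)
  have := hz.add (tendsto_const_nhds (x := (1/2 : ℝ)))
  simp only [zero_add, sub_add_cancel] at this
  refine this.congr fun p => ?_
  push_cast
  ring_nf

noncomputable def useq (m : ℕ) : ℝ :=
  Real.log ((m : ℝ) + 1) + γ - 1 / (2 * ((m : ℝ) + 1)) - (harmonic m : ℝ)

lemma useq_eq (m : ℕ) : useq m = -(Gaux (m + 1) - γ - 1 / (2 * ((m : ℝ) + 1))) := by
  simp only [useq, Gaux, harmonic_succ]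
  push_cast
  have h : ((m:ℝ) + 1) ≠ 0 := by positivity
  field_simp
  ring

lemma summable_useq : Summable useq := by
  have hone : HasSum (fun p : ℕ => 2 * (1 / (((p:ℝ) + 1) * ((p:ℝ) + 2)))) 2 := by
    have key := hasSum_telescope (g := fun j : ℕ => 1 / ((j : ℝ) + 1)) (l := 0)
      (fun j => by
        push_cast
        apply one_div_le_one_div_of_le (by positivity) (by linarith))
      (tendsto_const_nhds.div_atTop (tendsto_atTop_add_const_right _ 1 tendsto_natCast_atTop_atTop))
    simp only [Nat.cast_zero, zero_add, sub_zero, div_one] at key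
    have e : (fun j : ℕ => 1 / ((j : ℝ) + 1) - 1 / (((j:ℕ) + 1 : ℕ) + 1 : ℝ))
        = fun p : ℕ => 1 / (((p:ℝ) + 1) * ((p:ℝ) + 2)) := by
      funext j
      push_cast
      rw [div_sub_div _ _ (by positivity : ((j:ℝ) + 1) ≠ 0) (by positivity : ((j:ℝ) + 1 + 1) ≠ 0),
        div_eq_div_iff (by positivity) (by positivity)]
      ring
    rw [e] at key
    simpa using key.mul_left 2
  have h1 : Summable (fun p : ℕ => useq (p + 1)) := by
    apply Summable.of_norm_bounded hone.summable
    intro p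
    rw [useq_eq (p + 1), Real.norm_eq_abs, abs_neg,
      (show p + 1 + 1 = p + 2 from by omega),
      (show ((p + 1 : ℕ) : ℝ) + 1 = (p : ℝ) + 2 from by push_cast; ring)]
    exact master_est p
  exact (summable_nat_add_iff 1).1 h1

lemma sum_useq (N : ℕ) : ∑ m ∈ Finset.range N, useq m
    = Real.log ((N.factorial : ℕ) : ℝ) + N * γ + N - (harmonic N : ℝ) / 2 - N * (harmonic N : ℝ) := by
  induction N with
  | zero => simp [useq]
  | succ N ih =>
    have hfac : Real.log (((N+1).factorial : ℕ) : ℝ)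
        = Real.log ((N : ℝ) + 1) + Real.log ((N.factorial : ℕ) : ℝ) := by
      rw [Nat.factorial_succ]
      push_cast
      rw [Real.log_mul (by positivity) (by positivity)]
    rw [Finset.sum_range_succ, ih, hfac, useq]
    rw [harmonic_succ]
    push_cast
    have h : ((N:ℝ) + 1) ≠ 0 := by positivity
    field_simp
    ring

lemma tendsto_sum_useq : Tendsto (fun N => ∑ m ∈ Finset.range N, useq m) atTop
    (𝓝 ((Real.log (2 * Real.pi) - γ - 1) / 2)) := by
  have hQ : Tendsto (fun N : ℕ => Real.log (Stirling.stirlingSeq N) + Real.log 2 / 2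
      - Gaux N / 2 - (N : ℝ) * (Gaux N - γ)) atTop
      (𝓝 (Real.log (Real.sqrt Real.pi) + Real.log 2 / 2 - γ / 2 - 1 / 2)) := by
    refine Tendsto.sub (Tendsto.sub (Tendsto.add ?_ tendsto_const_nhds)
      (tendsto_Gaux.div_const 2)) tendsto_mul_Gaux
    exact (Stirling.tendsto_stirlingSeq_sqrt_pi).log (by positivity)
  have hconst : Real.log (Real.sqrt Real.pi) + Real.log 2 / 2 - γ / 2 - 1 / 2
      = (Real.log (2 * Real.pi) - γ - 1) / 2 := by
    rw [Real.log_sqrt Real.pi_pos.le, Real.log_mul two_ne_zero Real.pi_pos.ne']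
    ring
  rw [← hconst]
  apply hQ.congr'
  filter_upwards [eventually_ge_atTop 1] with N hN
  have hN0 : (0:ℝ) < N := by exact_mod_cast hN
  have expand : Real.log ((N.factorial : ℕ) : ℝ) = Real.log (Stirling.stirlingSeq N)
      + 1 / 2 * (Real.log 2 + Real.log N) + (N : ℝ) * (Real.log N - 1) := by
    have h := Stirling.log_stirlingSeq_formula N
    rw [Real.log_mul two_ne_zero hN0.ne', Real.log_div hN0.ne' (Real.exp_ne_zero 1),
      Real.log_exp] at h
    linarith
  rw [sum_useq, expand]
  simp only [Gaux]
  ring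

lemma hasSum_useq : HasSum useq ((Real.log (2 * Real.pi) - γ - 1) / 2) := by
  have h := summable_useq.hasSum
  rwa [tendsto_nhds_unique h.tendsto_sum_nat tendsto_sum_useq] at h

lemma hasSum_pnat : HasSum
    (fun n : ℕ+ => Real.log ((n : ℝ) / 1) - 1 / (2 * (n : ℝ)) - digamma ((n : ℝ) / 1))
    ((Real.log (2 * Real.pi) - γ - 1) / 2) := by
  rw [← Equiv.hasSum_iff (Equiv.pnatEquivNat.symm)]
  have e : ((fun n : ℕ+ => Real.log ((n : ℝ) / 1) - 1 / (2 * (n : ℝ)) - digamma ((n : ℝ) / 1))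
      ∘ (Equiv.pnatEquivNat.symm)) = useq := by
    funext m
    have hc : (((Equiv.pnatEquivNat.symm m : ℕ+) : ℕ) : ℝ) = (m : ℝ) + 1 := by
      simp [Equiv.pnatEquivNat, Nat.succPNat]
    simp only [Function.comp_apply, hc, div_one, digamma_nat_succ m, useq]
    ring
  rw [e]
  exact hasSum_useq

theorem S_one :
    S 1 = (Real.log (2 * π) - Real.eulerMascheroniConstant - 1) / 2 := by
  rw [S]
  exact hasSum_pnat.tsum_eq
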